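/- Let A ⊆ S_m, B ⊆ S_n, and let C be the set of π ∈ S_{m+n} such that the standardization of (π_1,...,π_m) lies in A and the standardization of (π_{m+1},...,π_{m+n}) lies in B. Then for every q > 0, (∑_{π∈A} q^{inv(π)}/[m]_q!) · (∑_{π∈B} q^{inv(π)}/[n]_q!) = ∑_{π∈C} q^{inv(π)}/[m+n]_q!. -/

import Mathlib

open scoped Classical

/-- The q-integer `[k]_q = 1 + q + ... + q^(k-1)`. -/
noncomputable def qint (q : ℝ) (k : ℕ) : ℝ := ∑ i ∈ Finset.range k, q ^ i

/-- The q-factorial `[n]_q! = [1]_q [2]_q ⋯ [n]_q`. -/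
noncomputable def qfact (q : ℝ) (n : ℕ) : ℝ := ∏ i ∈ Finset.range n, qint q (i + 1)

/-- The number of inversions of a permutation of `{0, ..., n-1}`. -/
def inversions {n : ℕ} (π : Equiv.Perm (Fin n)) : ℕ :=
  (Finset.univ.filter (fun p : Fin n × Fin n => p.1 < p.2 ∧ π p.2 < π p.1)).card

/-- The pattern `σ ∈ S_m` occurs consecutively in `π ∈ S_n` starting at (0-indexed) position `j`:
the window `π_j, ..., π_{j+m-1}` is order-isomorphic to `σ`. -/
def occursAt {m n : ℕ} (σ : Equiv.Perm (Fin m)) (π : Equiv.Perm (Fin n)) (j : ℕ) : Prop :=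
  ∃ h : j + m ≤ n, ∀ a b : Fin m,
    σ a < σ b ↔
      π ⟨j + (a : ℕ), lt_of_lt_of_le (Nat.add_lt_add_left a.isLt j) h⟩ <
      π ⟨j + (b : ℕ), lt_of_lt_of_le (Nat.add_lt_add_left b.isLt j) h⟩

/-- `π` avoids `σ` as a consecutive pattern. -/
def avoids {m n : ℕ} (σ : Equiv.Perm (Fin m)) (π : Equiv.Perm (Fin n)) : Prop :=
  ∀ j : ℕ, ¬ occursAt σ π j

/-- `P_n(σ, q)`: the probability that a Mallows(q) random permutation of length `n`
avoids `σ` as a consecutive pattern. -/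
noncomputable def Pn (m : ℕ) (σ : Equiv.Perm (Fin m)) (q : ℝ) (n : ℕ) : ℝ :=
  (∑ π ∈ Finset.univ.filter (fun π : Equiv.Perm (Fin n) => avoids σ π),
    q ^ inversions π) / qfact q n

/-- The standardization of the first `m` entries of `π ∈ S_{m+n}` is `σ`. -/
def firstIs {m n : ℕ} (π : Equiv.Perm (Fin (m + n))) (σ : Equiv.Perm (Fin m)) : Prop :=
  ∀ a b : Fin m, σ a < σ b ↔ π (Fin.castAdd n a) < π (Fin.castAdd n b)

/-- The standardization of the last `n` entries of `π ∈ S_{m+n}` is `τ`. -/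
def secondIs {m n : ℕ} (π : Equiv.Perm (Fin (m + n))) (τ : Equiv.Perm (Fin n)) : Prop :=
  ∀ a b : Fin n, τ a < τ b ↔ π (Fin.natAdd m a) < π (Fin.natAdd m b)

open Finset Equiv

lemma perm_eq_of_lt_iff {m : ℕ} (σ σ' : Equiv.Perm (Fin m))
    (h : ∀ a b, σ a < σ b ↔ σ' a < σ' b) : σ = σ' := by
  have hmono : StrictMono (fun x => σ' (σ.symm x)) := by
    intro x y hxy
    rw [← h]
    simpa using hxy
  have hsurj : Function.Surjective (fun x => σ' (σ.symm x)) :=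
    σ'.surjective.comp σ.symm.surjective
  have h0 := Subsingleton.elim (StrictMono.orderIsoOfSurjective _ hmono hsurj)
      (OrderIso.refl (Fin m))
  have h2 : ∀ x, σ' (σ.symm x) = x := by
    intro x
    have := congrArg (fun f : Fin m ≃o Fin m => f x) h0
    simpa [StrictMono.coe_orderIsoOfSurjective] using this
  ext a
  have h3 : σ' (σ.symm (σ a)) = σ a := h2 (σ a)
  rw [Equiv.symm_apply_apply] at h3
  exact congrArg Fin.val h3.symm

def cross {N : ℕ} (S : Finset (Fin N)) : ℕ :=
  ((S ×ˢ Sᶜ).filter (fun p => p.2 < p.1)).card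

lemma card_compl_eq {m n : ℕ} (S : Finset (Fin (m + n))) (h : S.card = m) :
    Sᶜ.card = n := by
  rw [Finset.card_compl, h, Fintype.card_fin]
  omega

noncomputable def mergePerm {m n : ℕ} (σ : Equiv.Perm (Fin m)) (τ : Equiv.Perm (Fin n))
    (S : Finset (Fin (m + n))) : Equiv.Perm (Fin (m + n)) :=
  if h : S.card = m then
    finSumFinEquiv.symm.trans <| (Equiv.sumCongr (σ : Equiv.Perm (Fin m)) τ).trans <|
      (Equiv.sumCongr (S.orderIsoOfFin h).toEquiv
        ((Sᶜ.orderIsoOfFin (card_compl_eq S h)).toEquiv.trans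
          (Equiv.subtypeEquivRight (fun x => Finset.mem_compl)))).trans <|
      Equiv.sumCompl (· ∈ S)
  else 1

lemma mergePerm_castAdd {m n : ℕ} (σ : Equiv.Perm (Fin m)) (τ : Equiv.Perm (Fin n))
    (S : Finset (Fin (m + n))) (h : S.card = m) (a : Fin m) :
    mergePerm σ τ S (Fin.castAdd n a) = ((S.orderIsoOfFin h) (σ a) : Fin (m + n)) := by
  rw [mergePerm, dif_pos h]
  simp [finSumFinEquiv_symm_apply_castAdd]

lemma mergePerm_natAdd {m n : ℕ} (σ : Equiv.Perm (Fin m)) (τ : Equiv.Perm (Fin n))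
    (S : Finset (Fin (m + n))) (h : S.card = m) (b : Fin n) :
    mergePerm σ τ S (Fin.natAdd m b) = ((Sᶜ.orderIsoOfFin (card_compl_eq S h)) (τ b) : Fin (m + n)) := by
  rw [mergePerm, dif_pos h]
  simp [finSumFinEquiv_symm_apply_natAdd]

lemma firstIs_mergePerm {m n : ℕ} (σ : Equiv.Perm (Fin m)) (τ : Equiv.Perm (Fin n))
    (S : Finset (Fin (m + n))) (h : S.card = m) :
    firstIs (mergePerm σ τ S) σ := by
  intro a b
  rw [mergePerm_castAdd σ τ S h, mergePerm_castAdd σ τ S h, Subtype.coe_lt_coe,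
    OrderIso.lt_iff_lt]

lemma secondIs_mergePerm {m n : ℕ} (σ : Equiv.Perm (Fin m)) (τ : Equiv.Perm (Fin n))
    (S : Finset (Fin (m + n))) (h : S.card = m) :
    secondIs (mergePerm σ τ S) τ := by
  intro a b
  rw [mergePerm_natAdd σ τ S h, mergePerm_natAdd σ τ S h, Subtype.coe_lt_coe,
    OrderIso.lt_iff_lt]

lemma castAdd_injective (m n : ℕ) : Function.Injective (Fin.castAdd n : Fin m → Fin (m+n)) := by
  intro a b h
  have h2 := congrArg Fin.val h
  simp only [Fin.coe_castAdd] at h2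
  exact Fin.ext h2

noncomputable def firstSet {m n : ℕ} (π : Equiv.Perm (Fin (m + n))) : Finset (Fin (m + n)) :=
  Finset.image (fun a : Fin m => π (Fin.castAdd n a)) Finset.univ

lemma card_firstSet {m n : ℕ} (π : Equiv.Perm (Fin (m + n))) : (firstSet π).card = m := by
  rw [firstSet, Finset.card_image_of_injective _
      (fun a b hab => castAdd_injective m n (π.injective hab)),
    Finset.card_univ, Fintype.card_fin]

lemma mem_firstSet {m n : ℕ} (π : Equiv.Perm (Fin (m + n))) (a : Fin m) :
    π (Fin.castAdd n a) ∈ firstSet π :=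
  Finset.mem_image_of_mem _ (Finset.mem_univ a)

lemma mem_firstSet_compl {m n : ℕ} (π : Equiv.Perm (Fin (m + n))) (b : Fin n) :
    π (Fin.natAdd m b) ∈ (firstSet π)ᶜ := by
  rw [Finset.mem_compl, firstSet, Finset.mem_image]
  rintro ⟨a, -, hab⟩
  have := π.injective hab
  have := congrArg Fin.val this
  simp at this
  omega

noncomputable def splitFirst {m n : ℕ} (π : Equiv.Perm (Fin (m + n))) : Equiv.Perm (Fin m) :=
  Equiv.ofBijective
    (fun a => ((firstSet π).orderIsoOfFin (card_firstSet π)).symm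
      ⟨π (Fin.castAdd n a), mem_firstSet π a⟩)
    (Finite.injective_iff_bijective.mp (by
      intro a b hab
      have := congrArg ((firstSet π).orderIsoOfFin (card_firstSet π)) hab
      simp only [OrderIso.apply_symm_apply, Subtype.mk.injEq] at this
      exact castAdd_injective m n (π.injective this)))

noncomputable def splitSecond {m n : ℕ} (π : Equiv.Perm (Fin (m + n))) : Equiv.Perm (Fin n) :=
  Equiv.ofBijective
    (fun b => (((firstSet π)ᶜ).orderIsoOfFin (card_compl_eq _ (card_firstSet π))).symm
      ⟨π (Fin.natAdd m b), mem_firstSet_compl π b⟩)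
    (Finite.injective_iff_bijective.mp (by
      intro a b hab
      have := congrArg (((firstSet π)ᶜ).orderIsoOfFin (card_compl_eq _ (card_firstSet π))) hab
      simp only [OrderIso.apply_symm_apply, Subtype.mk.injEq] at this
      have h2 := π.injective this
      have := congrArg Fin.val h2
      simp at this
      exact Fin.ext this))

lemma firstIs_splitFirst {m n : ℕ} (π : Equiv.Perm (Fin (m + n))) :
    firstIs π (splitFirst π) := by
  intro a b
  simp only [splitFirst, Equiv.ofBijective_apply]
  rw [OrderIso.lt_iff_lt (OrderIso.symm _), Subtype.mk_lt_mk]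

lemma secondIs_splitSecond {m n : ℕ} (π : Equiv.Perm (Fin (m + n))) :
    secondIs π (splitSecond π) := by
  intro a b
  simp only [splitSecond, Equiv.ofBijective_apply]
  rw [OrderIso.lt_iff_lt (OrderIso.symm _), Subtype.mk_lt_mk]

lemma firstIs_unique {m n : ℕ} (π : Equiv.Perm (Fin (m + n))) (σ σ' : Equiv.Perm (Fin m))
    (h : firstIs π σ) (h' : firstIs π σ') : σ = σ' :=
  perm_eq_of_lt_iff σ σ' (fun a b => (h a b).trans (h' a b).symm)

lemma secondIs_unique {m n : ℕ} (π : Equiv.Perm (Fin (m + n))) (τ τ' : Equiv.Perm (Fin n))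
    (h : secondIs π τ) (h' : secondIs π τ') : τ = τ' :=
  perm_eq_of_lt_iff τ τ' (fun a b => (h a b).trans (h' a b).symm)

lemma mergePerm_split {m n : ℕ} (π : Equiv.Perm (Fin (m + n))) :
    mergePerm (splitFirst π) (splitSecond π) (firstSet π) = π := by
  apply Equiv.ext
  intro x
  induction x using Fin.addCases with
  | left a =>
      rw [mergePerm_castAdd _ _ _ (card_firstSet π)]
      simp [splitFirst]
  | right b =>
      rw [mergePerm_natAdd _ _ _ (card_firstSet π)]
      simp [splitSecond]

lemma firstSet_mergePerm {m n : ℕ} (σ : Equiv.Perm (Fin m)) (τ : Equiv.Perm (Fin n))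
    (S : Finset (Fin (m + n))) (h : S.card = m) :
    firstSet (mergePerm σ τ S) = S := by
  ext x
  rw [firstSet, Finset.mem_image]
  constructor
  · rintro ⟨a, -, rfl⟩
    rw [mergePerm_castAdd _ _ _ h]
    exact Finset.coe_mem _
  · intro hx
    refine ⟨σ.symm ((S.orderIsoOfFin h).symm ⟨x, hx⟩), Finset.mem_univ _, ?_⟩
    rw [mergePerm_castAdd _ _ _ h]
    simp

lemma splitFirst_mergePerm {m n : ℕ} (σ : Equiv.Perm (Fin m)) (τ : Equiv.Perm (Fin n))
    (S : Finset (Fin (m + n))) (h : S.card = m) :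
    splitFirst (mergePerm σ τ S) = σ :=
  firstIs_unique _ _ _ (firstIs_splitFirst _) (firstIs_mergePerm σ τ S h)

lemma splitSecond_mergePerm {m n : ℕ} (σ : Equiv.Perm (Fin m)) (τ : Equiv.Perm (Fin n))
    (S : Finset (Fin (m + n))) (h : S.card = m) :
    splitSecond (mergePerm σ τ S) = τ :=
  secondIs_unique _ _ _ (secondIs_splitSecond _) (secondIs_mergePerm σ τ S h)

lemma inversions_eq_sum {k : ℕ} (ρ : Equiv.Perm (Fin k)) :
    inversions ρ = ∑ x : Fin k, ∑ y : Fin k, if x < y ∧ ρ y < ρ x then 1 else 0 := by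
  rw [inversions, Finset.card_filter, Fintype.sum_prod_type]

lemma cross_eq_sum {m n : ℕ} (S : Finset (Fin (m + n))) (h : S.card = m) :
    cross S = ∑ a : Fin m, ∑ b : Fin n,
      if ((Sᶜ.orderIsoOfFin (card_compl_eq S h)) b : Fin (m + n))
          < ((S.orderIsoOfFin h) a : Fin (m + n)) then 1 else 0 := by
  have step : (cross S : ℕ) = ∑ p ∈ (Finset.univ ×ˢ Finset.univ : Finset (Fin m × Fin n)),
      if ((Sᶜ.orderIsoOfFin (card_compl_eq S h)) p.2 : Fin (m + n))
          < ((S.orderIsoOfFin h) p.1 : Fin (m + n)) then 1 else 0 := by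
    rw [cross, Finset.card_filter]
    refine (Finset.sum_bij (fun p _ => ((((S.orderIsoOfFin h) p.1 : Fin (m+n)),
      ((Sᶜ.orderIsoOfFin (card_compl_eq S h)) p.2 : Fin (m+n))) : Fin (m+n) × Fin (m+n)))
        ?_ ?_ ?_ ?_).symm
    · intro p _
      exact Finset.mem_product.mpr ⟨Finset.coe_mem _, Finset.coe_mem _⟩
    · intro p₁ _ p₂ _ hp
      obtain ⟨h1, h2⟩ := Prod.mk.injEq _ _ _ _ ▸ hp
      have e1 : (S.orderIsoOfFin h) p₁.1 = (S.orderIsoOfFin h) p₂.1 := Subtype.ext h1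
      have e2 : (Sᶜ.orderIsoOfFin (card_compl_eq S h)) p₁.2
          = (Sᶜ.orderIsoOfFin (card_compl_eq S h)) p₂.2 := Subtype.ext h2
      exact Prod.ext ((S.orderIsoOfFin h).injective e1)
        ((Sᶜ.orderIsoOfFin (card_compl_eq S h)).injective e2)
    · rintro ⟨x, y⟩ hxy
      obtain ⟨hx, hy⟩ := Finset.mem_product.mp hxy
      refine ⟨((S.orderIsoOfFin h).symm ⟨x, hx⟩,
        (Sᶜ.orderIsoOfFin (card_compl_eq S h)).symm ⟨y, hy⟩), Finset.mem_univ _, ?_⟩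
      simp
    · intro p _
      rfl
  rw [step, Finset.sum_product]

lemma inversions_mergePerm {m n : ℕ} (σ : Equiv.Perm (Fin m)) (τ : Equiv.Perm (Fin n))
    (S : Finset (Fin (m + n))) (h : S.card = m) :
    inversions (mergePerm σ τ S) = inversions σ + inversions τ + cross S := by
  classical
  set π := mergePerm σ τ S with hπ
  have hval1 : ∀ a : Fin m, π (Fin.castAdd n a) = ((S.orderIsoOfFin h) (σ a) : Fin (m+n)) :=
    mergePerm_castAdd σ τ S h
  have hval2 : ∀ b : Fin n, π (Fin.natAdd m b)
      = ((Sᶜ.orderIsoOfFin (card_compl_eq S h)) (τ b) : Fin (m+n)) :=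
    mergePerm_natAdd σ τ S h
  have expand : inversions π = ∑ u : Fin m ⊕ Fin n, ∑ v : Fin m ⊕ Fin n,
      if finSumFinEquiv u < finSumFinEquiv v
          ∧ π (finSumFinEquiv v) < π (finSumFinEquiv u) then 1 else 0 := by
    rw [inversions_eq_sum]
    rw [← Equiv.sum_comp finSumFinEquiv
      (fun x => ∑ y : Fin (m+n), if x < y ∧ π y < π x then 1 else 0)]
    refine Finset.sum_congr rfl (fun u _ => ?_)
    rw [← Equiv.sum_comp finSumFinEquiv
      (fun y => if finSumFinEquiv u < y ∧ π y < π (finSumFinEquiv u) then 1 else 0)]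
  rw [expand]
  rw [Fintype.sum_sum_type]
  simp only [Fintype.sum_sum_type]
  have t11 : ∀ a a' : Fin m,
      (if finSumFinEquiv (Sum.inl a : Fin m ⊕ Fin n) < finSumFinEquiv (Sum.inl a' : Fin m ⊕ Fin n)
          ∧ π (finSumFinEquiv (Sum.inl a' : Fin m ⊕ Fin n)) < π (finSumFinEquiv (Sum.inl a : Fin m ⊕ Fin n)) then 1 else 0)
        = (if a < a' ∧ σ a' < σ a then 1 else 0) := by
    intro a a'
    refine if_congr (and_congr ?_ ?_) rfl rfl
    · simp only [finSumFinEquiv_apply_left, Fin.lt_def, Fin.coe_castAdd]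
    · rw [finSumFinEquiv_apply_left, finSumFinEquiv_apply_left, hval1, hval1, Subtype.coe_lt_coe, OrderIso.lt_iff_lt]
  have t12 : ∀ (a : Fin m) (b : Fin n),
      (if finSumFinEquiv (Sum.inl a : Fin m ⊕ Fin n) < finSumFinEquiv (Sum.inr b : Fin m ⊕ Fin n)
          ∧ π (finSumFinEquiv (Sum.inr b : Fin m ⊕ Fin n)) < π (finSumFinEquiv (Sum.inl a : Fin m ⊕ Fin n)) then 1 else 0)
        = (if ((Sᶜ.orderIsoOfFin (card_compl_eq S h)) (τ b) : Fin (m+n))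
            < ((S.orderIsoOfFin h) (σ a) : Fin (m+n)) then 1 else 0) := by
    intro a b
    have hlt : Fin.castAdd n a < Fin.natAdd m b := by
      simp only [Fin.lt_def, Fin.coe_castAdd, Fin.coe_natAdd]
      omega
    rw [finSumFinEquiv_apply_left, finSumFinEquiv_apply_right, hval1, hval2]
    exact if_congr (and_iff_right hlt) rfl rfl
  have t21 : ∀ (b : Fin n) (a : Fin m),
      (if finSumFinEquiv (Sum.inr b : Fin m ⊕ Fin n) < finSumFinEquiv (Sum.inl a : Fin m ⊕ Fin n)
          ∧ π (finSumFinEquiv (Sum.inl a : Fin m ⊕ Fin n)) < π (finSumFinEquiv (Sum.inr b : Fin m ⊕ Fin n)) then 1 else 0) = 0 := by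
    intro b a
    have hlt : ¬ (finSumFinEquiv (Sum.inr b : Fin m ⊕ Fin n) < finSumFinEquiv (Sum.inl a : Fin m ⊕ Fin n)) := by
      simp only [finSumFinEquiv_apply_left, finSumFinEquiv_apply_right, Fin.lt_def, Fin.coe_castAdd, Fin.coe_natAdd, not_lt]
      omega
    exact if_neg (fun hc => hlt hc.1)
  have t22 : ∀ b b' : Fin n,
      (if finSumFinEquiv (Sum.inr b : Fin m ⊕ Fin n) < finSumFinEquiv (Sum.inr b' : Fin m ⊕ Fin n)
          ∧ π (finSumFinEquiv (Sum.inr b' : Fin m ⊕ Fin n)) < π (finSumFinEquiv (Sum.inr b : Fin m ⊕ Fin n)) then 1 else 0)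
        = (if b < b' ∧ τ b' < τ b then 1 else 0) := by
    intro b b'
    refine if_congr (and_congr ?_ ?_) rfl rfl
    · simp only [finSumFinEquiv_apply_right, Fin.lt_def, Fin.coe_natAdd]
      omega
    · rw [finSumFinEquiv_apply_right, finSumFinEquiv_apply_right, hval2, hval2, Subtype.coe_lt_coe, OrderIso.lt_iff_lt]
  simp only [t11, t12, t21, t22]
  rw [Finset.sum_add_distrib, Finset.sum_add_distrib]
  have e1 : ∑ a : Fin m, ∑ a' : Fin m, (if a < a' ∧ σ a' < σ a then 1 else 0)
      = inversions σ := (inversions_eq_sum σ).symm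
  have e4 : ∑ b : Fin n, ∑ b' : Fin n, (if b < b' ∧ τ b' < τ b then 1 else 0)
      = inversions τ := (inversions_eq_sum τ).symm
  have e2 : ∑ a : Fin m, ∑ b : Fin n,
      (if ((Sᶜ.orderIsoOfFin (card_compl_eq S h)) (τ b) : Fin (m+n))
          < ((S.orderIsoOfFin h) (σ a) : Fin (m+n)) then 1 else 0) = cross S := by
    rw [cross_eq_sum S h]
    refine Fintype.sum_equiv σ _ _ (fun a => ?_)
    exact Fintype.sum_equiv τ _ _ (fun b => rfl)
  rw [e1, e2, e4]
  simp
  omega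

lemma sum_filter_eq (m n : ℕ) (q : ℝ) (A : Finset (Equiv.Perm (Fin m)))
    (B : Finset (Equiv.Perm (Fin n))) :
    ∑ π ∈ Finset.univ.filter (fun π : Equiv.Perm (Fin (m + n)) =>
        (∃ σ ∈ A, firstIs π σ) ∧ (∃ τ ∈ B, secondIs π τ)), q ^ inversions π
    = (∑ S ∈ Finset.univ.filter (fun S : Finset (Fin (m + n)) => S.card = m), q ^ cross S)
      * ((∑ σ ∈ A, q ^ inversions σ) * (∑ τ ∈ B, q ^ inversions τ)) := by
  classical
  have h1 : (∑ σ ∈ A, q ^ inversions σ) * (∑ τ ∈ B, q ^ inversions τ)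
      = ∑ p ∈ A ×ˢ B, q ^ inversions p.1 * q ^ inversions p.2 := by
    rw [Finset.sum_mul_sum, Finset.sum_product]
  have h2 : (∑ S ∈ Finset.univ.filter (fun S : Finset (Fin (m + n)) => S.card = m), q ^ cross S)
        * (∑ p ∈ A ×ˢ B, q ^ inversions p.1 * q ^ inversions p.2)
      = ∑ t ∈ (Finset.univ.filter (fun S : Finset (Fin (m + n)) => S.card = m)) ×ˢ (A ×ˢ B),
          q ^ cross t.1 * (q ^ inversions t.2.1 * q ^ inversions t.2.2) := by
    rw [Finset.sum_mul_sum, Finset.sum_product]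
  rw [h1, h2]
  refine Finset.sum_nbij' (fun π => (firstSet π, (splitFirst π, splitSecond π)))
      (fun t => mergePerm t.2.1 t.2.2 t.1) ?_ ?_ ?_ ?_ ?_
  · intro π hπ
    rw [Finset.mem_filter] at hπ
    obtain ⟨-, ⟨σ, hσA, hσ⟩, ⟨τ, hτB, hτ⟩⟩ := hπ
    rw [Finset.mem_product, Finset.mem_product]
    refine ⟨Finset.mem_filter.mpr ⟨Finset.mem_univ _, card_firstSet π⟩, ?_, ?_⟩
    · show splitFirst π ∈ A
      rw [firstIs_unique π (splitFirst π) σ (firstIs_splitFirst π) hσ]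
      exact hσA
    · show splitSecond π ∈ B
      rw [secondIs_unique π (splitSecond π) τ (secondIs_splitSecond π) hτ]
      exact hτB
  · intro t ht
    rw [Finset.mem_product, Finset.mem_product, Finset.mem_filter] at ht
    obtain ⟨⟨-, hS⟩, hA, hB⟩ := ht
    rw [Finset.mem_filter]
    exact ⟨Finset.mem_univ _,
      ⟨t.2.1, hA, firstIs_mergePerm _ _ _ hS⟩,
      ⟨t.2.2, hB, secondIs_mergePerm _ _ _ hS⟩⟩
  · intro π _
    exact mergePerm_split π
  · intro t ht
    rw [Finset.mem_product, Finset.mem_product, Finset.mem_filter] at ht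
    obtain ⟨⟨-, hS⟩, hA, hB⟩ := ht
    refine Prod.ext ?_ (Prod.ext ?_ ?_)
    · exact firstSet_mergePerm _ _ _ hS
    · exact splitFirst_mergePerm _ _ _ hS
    · exact splitSecond_mergePerm _ _ _ hS
  · intro π _
    conv_lhs => rw [← mergePerm_split π]
    rw [inversions_mergePerm _ _ _ (card_firstSet π), pow_add, pow_add]
    ring

lemma qfact_pos (q : ℝ) (hq : 0 < q) (k : ℕ) : 0 < qfact q k := by
  rw [qfact]
  refine Finset.prod_pos (fun i _ => ?_)
  rw [qint]
  exact Finset.sum_pos (fun j _ => pow_pos hq j) Finset.nonempty_range_add_one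

lemma cross_compl_singleton (k : ℕ) (p : Fin (k + 1)) :
    cross ({p}ᶜ : Finset (Fin (k + 1))) = k - (p : ℕ) := by
  rw [cross, compl_compl]
  have hset : ((({p}ᶜ : Finset (Fin (k + 1))) ×ˢ {p}).filter (fun pr => pr.2 < pr.1))
      = (({p}ᶜ : Finset (Fin (k + 1))).filter (fun x => p < x)) ×ˢ {p} := by
    ext ⟨x, y⟩
    simp only [Finset.mem_filter, Finset.mem_product, Finset.mem_singleton, Finset.mem_compl]
    constructor
    · rintro ⟨⟨hx, rfl⟩, hlt⟩
      exact ⟨⟨hx, hlt⟩, rfl⟩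
    · rintro ⟨⟨hx, hlt⟩, rfl⟩
      exact ⟨⟨hx, rfl⟩, hlt⟩
  rw [hset, Finset.card_product, Finset.card_singleton, mul_one]
  have hIoi : (({p}ᶜ : Finset (Fin (k + 1))).filter (fun x => p < x)) = Finset.Ioi p := by
    ext x
    simp only [Finset.mem_filter, Finset.mem_compl, Finset.mem_singleton, Finset.mem_Ioi]
    constructor
    · rintro ⟨-, h⟩; exact h
    · intro h; exact ⟨ne_of_gt h, h⟩
  rw [hIoi, Fin.card_Ioi]
  omega

lemma K_eq (q : ℝ) (k : ℕ) :
    ∑ S ∈ Finset.univ.filter (fun S : Finset (Fin (k + 1)) => S.card = k), q ^ cross S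
      = qint q (k + 1) := by
  classical
  have step : ∑ S ∈ Finset.univ.filter (fun S : Finset (Fin (k + 1)) => S.card = k), q ^ cross S
      = ∑ p : Fin (k + 1), q ^ (k - (p : ℕ)) := by
    refine (Finset.sum_bij (fun (p : Fin (k + 1)) _ => ({p}ᶜ : Finset (Fin (k + 1))))
      ?_ ?_ ?_ ?_).symm
    · intro p _
      rw [Finset.mem_filter]
      refine ⟨Finset.mem_univ _, ?_⟩
      rw [Finset.card_compl, Finset.card_singleton, Fintype.card_fin]
      omega
    · intro p₁ _ p₂ _ hp
      exact Finset.singleton_injective (compl_injective hp)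
    · intro S hS
      rw [Finset.mem_filter] at hS
      have hc : Sᶜ.card = 1 := by
        rw [Finset.card_compl, hS.2, Fintype.card_fin]
        omega
      obtain ⟨p, hp⟩ := Finset.card_eq_one.mp hc
      refine ⟨p, Finset.mem_univ _, ?_⟩
      show ({p}ᶜ : Finset (Fin (k + 1))) = S
      rw [← hp, compl_compl]
    · intro p _
      rw [cross_compl_singleton]
  rw [step, Fin.sum_univ_eq_sum_range (fun i => q ^ (k - i)) (k + 1), qint]
  have hre := Finset.sum_range_reflect (fun j => q ^ j) (k + 1)
  simpa using hre

lemma inversions_one_eq_zero (τ : Equiv.Perm (Fin 1)) : inversions τ = 0 := by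
  rw [inversions, Finset.card_eq_zero, Finset.filter_eq_empty_iff]
  intro p _
  rintro ⟨hlt, -⟩
  have h1 : (p.1 : ℕ) < p.2 := hlt
  have := p.1.isLt
  have := p.2.isLt
  omega

lemma sum_q_inv (q : ℝ) : ∀ k, (∑ π : Equiv.Perm (Fin k), q ^ inversions π) = qfact q k := by
  intro k
  induction k with
  | zero =>
      have hz : ∀ π : Equiv.Perm (Fin 0), inversions π = 0 := by
        intro π
        rw [inversions]
        simp
      simp [hz, qfact, Finset.card_univ]
  | succ k ih =>
      have key := sum_filter_eq k 1 q Finset.univ Finset.univ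
      have hC : Finset.univ.filter (fun π : Equiv.Perm (Fin (k + 1)) =>
          (∃ σ ∈ (Finset.univ : Finset (Equiv.Perm (Fin k))), firstIs π σ)
            ∧ (∃ τ ∈ (Finset.univ : Finset (Equiv.Perm (Fin 1))), secondIs π τ)) = Finset.univ :=
        Finset.filter_true_of_mem (fun π _ =>
          ⟨⟨splitFirst π, Finset.mem_univ _, firstIs_splitFirst π⟩,
            ⟨splitSecond π, Finset.mem_univ _, secondIs_splitSecond π⟩⟩)
      rw [hC, K_eq, ih] at key
      have hT1 : (∑ τ : Equiv.Perm (Fin 1), q ^ inversions τ) = 1 := by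
        simp [inversions_one_eq_zero, Finset.card_univ]
      rw [hT1] at key
      have hstep : qfact q (k + 1) = qfact q k * qint q (k + 1) := by
        rw [qfact, qfact, Finset.prod_range_succ]
      rw [key, hstep]
      ring

/-- product lemma for Mallows weights. -/
theorem mallows_product_lemma (m n : ℕ) (q : ℝ) (hq : 0 < q)
    (A : Finset (Equiv.Perm (Fin m))) (B : Finset (Equiv.Perm (Fin n))) :
    (∑ π ∈ A, q ^ inversions π / qfact q m) * (∑ π ∈ B, q ^ inversions π / qfact q n)
      = ∑ π ∈ Finset.univ.filter (fun π : Equiv.Perm (Fin (m + n)) =>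
            (∃ σ ∈ A, firstIs π σ) ∧ (∃ τ ∈ B, secondIs π τ)),
          q ^ inversions π / qfact q (m + n) := by
  classical
  have hfm := qfact_pos q hq m
  have hfn := qfact_pos q hq n
  have hfmn := qfact_pos q hq (m + n)
  have hK : (∑ S ∈ Finset.univ.filter (fun S : Finset (Fin (m + n)) => S.card = m), q ^ cross S)
      * (qfact q m * qfact q n) = qfact q (m + n) := by
    have key := sum_filter_eq m n q Finset.univ Finset.univ
    have hC : Finset.univ.filter (fun π : Equiv.Perm (Fin (m + n)) =>
        (∃ σ ∈ (Finset.univ : Finset (Equiv.Perm (Fin m))), firstIs π σ)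
          ∧ (∃ τ ∈ (Finset.univ : Finset (Equiv.Perm (Fin n))), secondIs π τ)) = Finset.univ :=
      Finset.filter_true_of_mem (fun π _ =>
        ⟨⟨splitFirst π, Finset.mem_univ _, firstIs_splitFirst π⟩,
          ⟨splitSecond π, Finset.mem_univ _, secondIs_splitSecond π⟩⟩)
    rw [hC, sum_q_inv q m, sum_q_inv q n, sum_q_inv q (m + n)] at key
    exact key.symm
  rw [← Finset.sum_div, ← Finset.sum_div, ← Finset.sum_div, sum_filter_eq m n q A B,
    div_mul_div_comm, div_eq_div_iff (by positivity) hfmn.ne', ← hK]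
  ring
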